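/- In the setting of the generalized Frobenius code construction (n | p^{dm}+1, X^n-1 = g·∏_{i<d} σ^i(h) over F_p(η) with [F_p(η):F_p]=d, a defined by a ≡ 1 mod g and a ≡ σ^i(αη) mod σ^i(h)), the polynomial a satisfies a(X^{-1}) ≡ a(X) (mod (X^n-1)/g), and consequently the uniquely cyclic subspace S = {(u·g, u·a·g) : u ∈ F_p[X]/(X^n-1)} of F_p^n × F_p^n is totally isotropic for the symplectic form ⟨(a,b),(c,d)⟩ = a^T d - b^T c. -/

import Mathlib

open Polynomial

section Helpers

variable {R : Type*} [CommRing R]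

lemma hlp_comp_sub_comp_dvd (f u v : R[X]) : (u - v) ∣ f.comp u - f.comp v := by
  have := Polynomial.sub_dvd_eval_sub u v (f.map (C : R →+* R[X]))
  simpa only [Polynomial.eval_map, Polynomial.comp] using this

lemma hlp_dvd_mul_sub_mul {m A B C D : R} (h1 : m ∣ A - B) (h2 : m ∣ C - D) :
    m ∣ A * C - B * D := by
  have : A * C - B * D = (A - B) * C + B * (C - D) := by ring
  rw [this]
  exact dvd_add (h1.mul_right _) (h2.mul_left _)

lemma hlp_monic_Xn {n : ℕ} (hn : 0 < n) : ((X : R[X]) ^ n - 1).Monic := by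
  have := Polynomial.monic_X_pow_sub_C (1 : R) hn.ne'
  simpa using this

lemma hlp_Xn_dvd {n k : ℕ} (h : n ∣ k) : ((X : R[X]) ^ n - 1) ∣ X ^ k - 1 := by
  obtain ⟨c, rfl⟩ := h
  rw [pow_mul]
  simpa using sub_dvd_pow_sub_pow ((X : R[X]) ^ n) 1 c

lemma hlp_Xn_dvd_pow_sub_pow {n e f : ℕ} (hef : f ≤ e) (h : n ∣ e - f) :
    ((X : R[X]) ^ n - 1) ∣ X ^ e - X ^ f := by
  have : (X : R[X]) ^ e - X ^ f = X ^ f * (X ^ (e - f) - 1) := by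
    rw [mul_sub, mul_one, ← pow_add, Nat.add_sub_cancel' hef]
  rw [this]
  exact (hlp_Xn_dvd h).mul_left _

lemma hlp_mod_congr {m P Q : R[X]} (hm : m.Monic) (h : m ∣ P - Q) : P %ₘ m = Q %ₘ m := by
  rw [← sub_eq_zero, ← Polynomial.sub_modByMonic]
  exact (Polynomial.modByMonic_eq_zero_iff_dvd hm).2 h

lemma hlp_self_sub_mod {m : R[X]} (hm : m.Monic) (P : R[X]) : m ∣ P - P %ₘ m := by
  rw [Polynomial.modByMonic_eq_sub_mul_div P m]
  exact ⟨P /ₘ m, by ring⟩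

lemma hlp_Xpow_mod [Nontrivial R] {n : ℕ} (hn : 0 < n) (e : ℕ) :
    (X : R[X]) ^ e %ₘ (X ^ n - 1) = X ^ (e % n) := by
  have h1 : ((X : R[X]) ^ n - 1) ∣ X ^ e - X ^ (e % n) :=
    hlp_Xn_dvd_pow_sub_pow (Nat.mod_le e n) (Nat.dvd_sub_mod e)
  have h2 := hlp_mod_congr (hlp_monic_Xn hn) h1
  rw [h2, Polynomial.modByMonic_eq_self_iff (hlp_monic_Xn hn)]
  have hdeg : ((X : R[X]) ^ n - 1).degree = (n : WithBot ℕ) := by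
    have := Polynomial.degree_X_pow_sub_C hn (1 : R)
    rwa [map_one] at this
  rw [hdeg]
  calc degree ((X : R[X]) ^ (e % n)) ≤ ((e % n : ℕ) : WithBot ℕ) := Polynomial.degree_X_pow_le _
    _ < (n : WithBot ℕ) := by exact_mod_cast Nat.mod_lt e hn


lemma hlp_nat_cond {n i j : ℕ} (hn : 0 < n) (hi : i < n) (hj : j < n) :
    (i + (n - 1) * j) % n = 0 ↔ i = j := by
  have hcast : ((n - 1 : ℕ) : ℤ) = (n : ℤ) - 1 := by omega
  rw [← Nat.dvd_iff_mod_eq_zero]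
  constructor
  · intro hdvd
    have h1 : (n : ℤ) ∣ ((i : ℤ) - j) + n * j := by
      have := Int.natCast_dvd_natCast.mpr hdvd
      push_cast [hcast] at this
      have heq : (i : ℤ) + ((n : ℤ) - 1) * j = ((i : ℤ) - j) + n * j := by ring
      rwa [heq] at this
    have h2 : (n : ℤ) ∣ (i : ℤ) - j := (dvd_add_left (dvd_mul_right _ _)).mp h1
    have h3 : (i : ℤ) - j = 0 := Int.eq_zero_of_abs_lt_dvd h2 (by rw [abs_sub_lt_iff]; omega)
    omega
  · rintro rfl
    have : i + (n - 1) * i = n * i := by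
      have h1 : n - 1 + 1 = n := by omega
      calc i + (n - 1) * i = ((n - 1) + 1) * i := by ring
        _ = n * i := by rw [h1]
    rw [this]
    exact Dvd.intro i rfl

lemma hlp_pairing [Nontrivial R] {n : ℕ} (hn : 0 < n) (f1 f2 : R[X])
    (h1 : f1.degree < (n : WithBot ℕ)) (h2 : f2.degree < (n : WithBot ℕ)) :
    ((f1 * f2.comp (X ^ (n - 1))) %ₘ (X ^ n - 1)).coeff 0
      = ∑ i : Fin n, f1.coeff i * f2.coeff i := by
  have hnd1 : f1.natDegree < n := by
    rcases eq_or_ne f1 0 with rfl | hne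
    · simpa using hn
    · exact (Polynomial.natDegree_lt_iff_degree_lt hne).mpr h1
  have hnd2 : f2.natDegree < n := by
    rcases eq_or_ne f2 0 with rfl | hne
    · simpa using hn
    · exact (Polynomial.natDegree_lt_iff_degree_lt hne).mpr h2
  have e2 : f2.comp (X ^ (n - 1)) =
      ∑ j ∈ Finset.range n, monomial ((n - 1) * j) (f2.coeff j) := by
    conv_lhs => rw [f2.as_sum_range' n hnd2]
    rw [Polynomial.comp, Polynomial.eval₂_finset_sum]
    refine Finset.sum_congr rfl fun j _ => ?_
    rw [Polynomial.eval₂_monomial, ← pow_mul, Polynomial.C_mul_X_pow_eq_monomial]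
  have e3 : f1 * f2.comp (X ^ (n - 1)) =
      ∑ i ∈ Finset.range n, ∑ j ∈ Finset.range n,
        monomial (i + (n - 1) * j) (f1.coeff i * f2.coeff j) := by
    conv_lhs => rw [f1.as_sum_range' n hnd1, e2]
    rw [Finset.sum_mul_sum]
    exact Finset.sum_congr rfl fun i _ => Finset.sum_congr rfl fun j _ => by
      rw [Polynomial.monomial_mul_monomial]
  let T : R[X] →+ R :=
    { toFun := fun P => (P %ₘ (X ^ n - 1)).coeff 0
      map_zero' := by simp
      map_add' := fun P Q => by
        show ((P + Q) %ₘ (X ^ n - 1)).coeff 0 = (P %ₘ (X ^ n - 1)).coeff 0 + (Q %ₘ (X ^ n - 1)).coeff 0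
        rw [Polynomial.add_modByMonic, Polynomial.coeff_add] }
  have hT : ∀ e (c : R), T (monomial e c) = c * (if e % n = 0 then 1 else 0) := by
    intro e c
    show ((monomial e c : R[X]) %ₘ (X ^ n - 1)).coeff 0 = _
    rw [← Polynomial.C_mul_X_pow_eq_monomial, ← Polynomial.smul_eq_C_mul,
      Polynomial.smul_modByMonic, Polynomial.coeff_smul, hlp_Xpow_mod hn,
      Polynomial.coeff_X_pow, smul_eq_mul]
    congr 1
    simp [eq_comm]
  have := congrArg T e3
  rw [map_sum] at this
  simp only [map_sum, hT] at this
  change ((f1 * f2.comp (X ^ (n - 1))) %ₘ (X ^ n - 1)).coeff 0 = _ at this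
  rw [this, Fin.sum_univ_eq_sum_range (fun k => f1.coeff k * f2.coeff k) n]
  refine Finset.sum_congr rfl fun i hi => ?_
  rw [Finset.mem_range] at hi
  have hcongr : ∀ j ∈ Finset.range n,
      (f1.coeff i * f2.coeff j * if (i + (n - 1) * j) % n = 0 then (1:R) else 0)
        = (if i = j then f1.coeff i * f2.coeff j else 0) := by
    intro j hj
    rw [Finset.mem_range] at hj
    simp only [hlp_nat_cond hn hi hj, mul_ite, mul_one, mul_zero]
  rw [Finset.sum_congr rfl hcongr, Finset.sum_ite_eq]
  simp [hi]

end Helpers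


/-- The coefficient vector of a polynomial, truncated to length `n`. -/
def polyToVec {p : ℕ} (n : ℕ) (q : Polynomial (ZMod p)) : Fin n → ZMod p :=
  fun i => q.coeff (i : ℕ)

/-- The symplectic form `⟨(a,b),(c,d)⟩ = aᵀd - bᵀc` on `F_p^n × F_p^n`. -/
def sympForm {p n : ℕ} (u v : (Fin n → ZMod p) × (Fin n → ZMod p)) : ZMod p :=
  (∑ i : Fin n, u.1 i * v.2 i) - (∑ i : Fin n, u.2 i * v.1 i)

theorem stmt_17 (p d m n : ℕ) (hp : p.Prime) [Fact p.Prime]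
    (hd : 0 < d) (hm : 0 < m) (hn : 0 < n) (hdvd : n ∣ p ^ (d * m) + 1)
    (η : GaloisField p d) (hη : Algebra.adjoin (ZMod p) {η} = ⊤)
    (g : Polynomial (ZMod p)) (h : Polynomial (GaloisField p d))
    (hfact : (X : Polynomial (GaloisField p d)) ^ n - 1 =
      g.map (algebraMap (ZMod p) (GaloisField p d)) *
        ∏ i ∈ Finset.range d,
          (fun q : Polynomial (GaloisField p d) =>
            q.map (frobenius (GaloisField p d) p))^[i] h)
    (hcopg : ∀ i < d, IsCoprime (g.map (algebraMap (ZMod p) (GaloisField p d)))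
      ((fun q : Polynomial (GaloisField p d) =>
        q.map (frobenius (GaloisField p d) p))^[i] h))
    (hcoph : ∀ i < d, ∀ j < d, i ≠ j →
      IsCoprime ((fun q : Polynomial (GaloisField p d) =>
          q.map (frobenius (GaloisField p d) p))^[i] h)
        ((fun q : Polynomial (GaloisField p d) =>
          q.map (frobenius (GaloisField p d) p))^[j] h))
    (α : ZMod p) (hα : α ≠ 0)
    (a : Polynomial (ZMod p))
    (ha1 : g.map (algebraMap (ZMod p) (GaloisField p d)) ∣
      (a.map (algebraMap (ZMod p) (GaloisField p d)) - 1))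
    (ha2 : ∀ i < d,
      (fun q : Polynomial (GaloisField p d) =>
        q.map (frobenius (GaloisField p d) p))^[i] h ∣
          (a.map (algebraMap (ZMod p) (GaloisField p d)) -
            Polynomial.C ((algebraMap (ZMod p) (GaloisField p d) α * η) ^ p ^ i)))
    (S : Set ((Fin n → ZMod p) × (Fin n → ZMod p)))
    (hS : S = {w | ∃ u : Polynomial (ZMod p),
      w = (polyToVec n ((u * g) %ₘ (X ^ n - 1)),
           polyToVec n ((u * (a * g)) %ₘ (X ^ n - 1)))}) :
    ((∏ i ∈ Finset.range d,
        (fun q : Polynomial (GaloisField p d) =>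
          q.map (frobenius (GaloisField p d) p))^[i] h) ∣
      ((a.map (algebraMap (ZMod p) (GaloisField p d))).comp (X ^ (n - 1)) -
        a.map (algebraMap (ZMod p) (GaloisField p d)))) ∧
    (∀ u ∈ S, ∀ v ∈ S, sympForm u v = 0) := by
  classical
  have hφinj : Function.Injective (algebraMap (ZMod p) (GaloisField p d)) :=
    (algebraMap (ZMod p) (GaloisField p d)).injective
  set A := a.map (algebraMap (ZMod p) (GaloisField p d)) with hA
  -- frobenius fixes images of polynomials over ZMod p
  have hfix : ∀ f : Polynomial (ZMod p),
      (f.map (algebraMap (ZMod p) (GaloisField p d))).map (frobenius (GaloisField p d) p)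
        = f.map (algebraMap (ZMod p) (GaloisField p d)) := by
    intro f
    rw [Polynomial.map_map]
    congr 1
    ext x
    simp only [RingHom.comp_apply, frobenius_def, ← map_pow, ZMod.pow_card]
  have base : ∀ f : Polynomial (GaloisField p d),
      f.map (frobenius (GaloisField p d) p) = f → f ^ p = f.comp (X ^ p) := by
    intro f hf
    rw [← Polynomial.map_frobenius_expand p f, Polynomial.expand_eq_comp_X_pow, Polynomial.map_comp, hf]
    congr 1
    simp
  have hApow : ∀ k : ℕ, A ^ p ^ k = A.comp (X ^ p ^ k) := by
    intro k
    induction k with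
    | zero => simp
    | succ k ih =>
      have hcoef : (A.comp (X ^ p ^ k)).map (frobenius (GaloisField p d) p)
          = A.comp (X ^ p ^ k) := by
        have heq : A.comp (X ^ p ^ k)
            = (a.comp (X ^ p ^ k)).map (algebraMap (ZMod p) (GaloisField p d)) := by
          rw [Polynomial.map_comp, hA]
          simp
        rw [heq]
        exact hfix _
      calc A ^ p ^ (k + 1) = (A ^ p ^ k) ^ p := by rw [← pow_mul, pow_succ]
        _ = (A.comp (X ^ p ^ k)) ^ p := by rw [ih]
        _ = (A.comp (X ^ p ^ k)).comp (X ^ p) := base _ hcoef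
        _ = A.comp ((X ^ p) ^ p ^ k) := by rw [Polynomial.comp_assoc, Polynomial.X_pow_comp]
        _ = A.comp (X ^ p ^ (k + 1)) := by rw [← pow_mul, ← pow_succ']
  have hpowcard : ∀ x : GaloisField p d, x ^ p ^ (d * m) = x := by
    haveI : Fintype (GaloisField p d) := Fintype.ofFinite _
    have hcard : Fintype.card (GaloisField p d) = p ^ d := by
      rw [← Nat.card_eq_fintype_card, GaloisField.card p d hd.ne']
    intro x
    have := FiniteField.pow_card_pow m x
    rwa [hcard, ← pow_mul] at this
  -- Part 1
  have hpart1 : (∏ i ∈ Finset.range d,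
      (fun q : Polynomial (GaloisField p d) =>
        q.map (frobenius (GaloisField p d) p))^[i] h) ∣
      A.comp (X ^ (n - 1)) - A := by
    apply Finset.prod_dvd_of_coprime
    · intro i hi j hj hij
      exact hcoph i (Finset.mem_range.mp hi) j (Finset.mem_range.mp hj) hij
    · intro i hi
      rw [Finset.mem_range] at hi
      set hi_poly := (fun q : Polynomial (GaloisField p d) =>
        q.map (frobenius (GaloisField p d) p))^[i] h with hhp
      obtain ⟨s, hs⟩ := hdvd
      have hs1 : 1 ≤ s := by
        rcases Nat.eq_zero_or_pos s with rfl | hpos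
        · simp at hs
        · exact hpos
      obtain ⟨s', rfl⟩ : ∃ s', s = s' + 1 := ⟨s - 1, by omega⟩
      rw [Nat.mul_add, Nat.mul_one] at hs
      have hdvd1 : hi_poly ∣ (X : Polynomial (GaloisField p d)) ^ n - 1 := by
        rw [hfact]
        exact (Finset.dvd_prod_of_mem _ (Finset.mem_range.mpr hi)).mul_left _
      have e1 : ((X : Polynomial (GaloisField p d)) ^ n - 1) ∣
          X ^ p ^ (d * m) - X ^ (n - 1) := by
        apply hlp_Xn_dvd_pow_sub_pow
        · have hK : n - 1 ≤ n * s' + n - 1 := by omega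
          omega
        · refine ⟨s', ?_⟩
          omega
      have e2 : hi_poly ∣ A.comp (X ^ (n - 1)) - A.comp (X ^ p ^ (d * m)) := by
        refine dvd_trans ?_ (hlp_comp_sub_comp_dvd A (X ^ (n - 1)) (X ^ p ^ (d * m)))
        have heq : (X : Polynomial (GaloisField p d)) ^ (n - 1) - X ^ p ^ (d * m)
            = -(X ^ p ^ (d * m) - X ^ (n - 1)) := by ring
        rw [heq]
        exact (dvd_neg).mpr (hdvd1.trans e1)
      have hc := ha2 i hi
      set c := ((algebraMap (ZMod p) (GaloisField p d)) α * η) ^ p ^ i with hcdef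
      have e3 : hi_poly ∣ A ^ p ^ (d * m) - (C c) ^ p ^ (d * m) :=
        hc.trans (sub_dvd_pow_sub_pow _ _ _)
      have e4 : (C c : Polynomial (GaloisField p d)) ^ p ^ (d * m) = C c := by
        rw [← map_pow, hpowcard]
      have e5 : hi_poly ∣ C c - A := by
        rw [← neg_sub A (C c)]
        exact (dvd_neg).mpr hc
      have final : A.comp (X ^ (n - 1)) - A
          = (A.comp (X ^ (n - 1)) - A.comp (X ^ p ^ (d * m)))
            + ((A ^ p ^ (d * m) - (C c) ^ p ^ (d * m)) + (C c - A)) := by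
        rw [hApow (d * m), e4]
        ring
      rw [final]
      exact dvd_add e2 (dvd_add e3 e5)
  refine ⟨hpart1, ?_⟩
  -- Part 2
  have hkey : ((X : Polynomial (ZMod p)) ^ n - 1) ∣
      g * g.comp (X ^ (n - 1)) * (a.comp (X ^ (n - 1)) - a) := by
    rw [← Polynomial.map_dvd_map (algebraMap (ZMod p) (GaloisField p d)) hφinj
      (hlp_monic_Xn hn)]
    have hmapm : ((X : Polynomial (ZMod p)) ^ n - 1).map
        (algebraMap (ZMod p) (GaloisField p d))
        = (X : Polynomial (GaloisField p d)) ^ n - 1 := by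
      simp
    have hmapr : (g * g.comp (X ^ (n - 1)) * (a.comp (X ^ (n - 1)) - a)).map
        (algebraMap (ZMod p) (GaloisField p d))
        = (g.map (algebraMap (ZMod p) (GaloisField p d)))
          * (((g.map (algebraMap (ZMod p) (GaloisField p d))).comp (X ^ (n - 1)))
            * (A.comp (X ^ (n - 1)) - A)) := by
      simp only [Polynomial.map_mul, Polynomial.map_sub, Polynomial.map_comp,
        Polynomial.map_pow, Polynomial.map_X, hA]
      ring
    rw [hmapm, hmapr, hfact]
    exact mul_dvd_mul_left _ (hpart1.mul_left _)
  intro u hu v hv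
  rw [hS] at hu hv
  obtain ⟨u1, rfl⟩ := hu
  obtain ⟨u2, rfl⟩ := hv
  set M := (X : Polynomial (ZMod p)) ^ n - 1 with hM
  have hmon : M.Monic := hlp_monic_Xn hn
  have hdegM : M.degree = (n : WithBot ℕ) := by
    have := Polynomial.degree_X_pow_sub_C hn (1 : ZMod p)
    rwa [map_one] at this
  set r1 := (u1 * g) %ₘ M with hr1
  set r1' := (u1 * (a * g)) %ₘ M with hr1'
  set r2 := (u2 * g) %ₘ M with hr2
  set r2' := (u2 * (a * g)) %ₘ M with hr2'
  have hdeg : ∀ f : Polynomial (ZMod p), (f %ₘ M).degree < (n : WithBot ℕ) := fun f => by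
    rw [← hdegM]
    exact Polynomial.degree_modByMonic_lt f hmon
  show sympForm (polyToVec n r1, polyToVec n r1') (polyToVec n r2, polyToVec n r2') = 0
  simp only [sympForm, polyToVec]
  rw [← hlp_pairing hn r1 r2' (hr1 ▸ hdeg _) (hr2' ▸ hdeg _),
    ← hlp_pairing hn r1' r2 (hr1' ▸ hdeg _) (hr2 ▸ hdeg _)]
  rw [sub_eq_zero]
  apply congrArg (fun q : Polynomial (ZMod p) => q.coeff 0)
  apply hlp_mod_congr hmon
  have hcompdvd : M ∣ M.comp (X ^ (n - 1)) := by
    have heq : M.comp (X ^ (n - 1)) = X ^ ((n - 1) * n) - 1 := by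
      rw [hM, Polynomial.sub_comp, Polynomial.X_pow_comp, Polynomial.one_comp, ← pow_mul]
    rw [heq, hM]
    exact hlp_Xn_dvd ⟨n - 1, by ring⟩
  have hcomp_congr : ∀ P : Polynomial (ZMod p),
      M ∣ (P %ₘ M).comp (X ^ (n - 1)) - P.comp (X ^ (n - 1)) := by
    intro P
    obtain ⟨k, hk⟩ := hlp_self_sub_mod hmon P
    have h2 : P %ₘ M - P = -(M * k) := by
      rw [← hk]
      ring
    rw [← Polynomial.sub_comp, h2, Polynomial.neg_comp, Polynomial.mul_comp]
    exact (dvd_neg).mpr (hcompdvd.mul_right _)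
  have c1 : M ∣ r1 - u1 * g := by
    rw [hr1, ← neg_sub (u1 * g)]
    exact (dvd_neg).mpr (hlp_self_sub_mod hmon _)
  have c1' : M ∣ r1' - u1 * (a * g) := by
    rw [hr1', ← neg_sub (u1 * (a * g))]
    exact (dvd_neg).mpr (hlp_self_sub_mod hmon _)
  have c2 := hcomp_congr (u2 * (a * g))
  have c2' := hcomp_congr (u2 * g)
  have d1 : M ∣ r1 * r2'.comp (X ^ (n - 1))
      - (u1 * g) * ((u2 * (a * g)).comp (X ^ (n - 1))) := hlp_dvd_mul_sub_mul c1 c2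
  have d2 : M ∣ r1' * r2.comp (X ^ (n - 1))
      - (u1 * (a * g)) * ((u2 * g).comp (X ^ (n - 1))) := hlp_dvd_mul_sub_mul c1' c2'
  have d3 : M ∣ (u1 * g) * ((u2 * (a * g)).comp (X ^ (n - 1)))
      - (u1 * (a * g)) * ((u2 * g).comp (X ^ (n - 1))) := by
    have expand : (u1 * g) * ((u2 * (a * g)).comp (X ^ (n - 1)))
        - (u1 * (a * g)) * ((u2 * g).comp (X ^ (n - 1)))
        = (u1 * u2.comp (X ^ (n - 1)))
          * (g * g.comp (X ^ (n - 1)) * (a.comp (X ^ (n - 1)) - a)) := by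
      simp only [Polynomial.mul_comp]
      ring
    rw [expand, hM]
    exact hkey.mul_left _
  have final : r1 * r2'.comp (X ^ (n - 1)) - r1' * r2.comp (X ^ (n - 1))
      = (r1 * r2'.comp (X ^ (n - 1)) - (u1 * g) * ((u2 * (a * g)).comp (X ^ (n - 1))))
        + ((u1 * g) * ((u2 * (a * g)).comp (X ^ (n - 1)))
          - (u1 * (a * g)) * ((u2 * g).comp (X ^ (n - 1))))
        + (-(r1' * r2.comp (X ^ (n - 1))
          - (u1 * (a * g)) * ((u2 * g).comp (X ^ (n - 1))))) := by
    ring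
  rw [final]
  exact dvd_add (dvd_add d1 d3) ((dvd_neg).mpr d2)
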